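/- arXiv:1410.1331 — 14 statements merged into one kernel-verified Lean document; each statement's English description precedes it below -/
import Mathlib

section
/- If R is a ring and I is an ideal of R with I ⊆ J(R) (the Jacobson radical), and the quotient ring R/I is J-Armendariz, then R is J-Armendariz. -/
open Polynomial

/-- A ring `R` is J-Armendariz if whenever `f * g = 0` in `R[X]`, every product of a
coefficient of `f` with a coefficient of `g` lies in the Jacobson radical of `R`. -/
def IsJArmendariz (R : Type*) [Ring R] : Prop :=
  ∀ f g : R[X], f * g = 0 →
    ∀ i j : ℕ, f.coeff i * g.coeff j ∈ Ideal.jacobson (⊥ : Ideal R)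

private lemma pullback_jacobson {R : Type*} [Ring R] (I : TwoSidedIdeal R)
    (hIJ : ∀ x ∈ I, x ∈ Ideal.jacobson (⊥ : Ideal R)) (x : R)
    (hx : I.ringCon.mk' x ∈ Ideal.jacobson (⊥ : Ideal I.ringCon.Quotient)) :
    x ∈ Ideal.jacobson (⊥ : Ideal R) := by
  rw [Ideal.mem_jacobson_iff]
  intro y
  obtain ⟨zbar, hz⟩ := Ideal.mem_jacobson_iff.1 hx (I.ringCon.mk' y)
  rw [Ideal.mem_bot] at hz
  obtain ⟨z, rfl⟩ : ∃ z : R, I.ringCon.mk' z = zbar := Quotient.exists_rep zbar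
  have hmem : z * y * x + z - 1 ∈ I := by
    have : I.ringCon (z * y * x + z - 1) 0 := by
      rw [← sub_eq_zero] at hz
      have := (RingCon.eq I.ringCon (a := z * y * x + z - 1) (b := 0))
      apply this.mp
      simpa using hz
    exact this
  have hJ : (z * (y * x + 1)) - 1 ∈ Ideal.jacobson (⊥ : Ideal R) := by
    have := hIJ _ hmem
    convert this using 1
    noncomm_ring
  obtain ⟨s, hs⟩ := Ideal.exists_mul_sub_mem_of_sub_one_mem_jacobson _ hJ
  rw [Ideal.mem_bot, sub_eq_zero] at hs
  refine ⟨s * z, ?_⟩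
  rw [Ideal.mem_bot]
  have : s * z * y * x + s * z - 1 = s * (z * (y * x + 1)) - 1 := by noncomm_ring
  rw [this, hs, sub_self]

theorem quotient_jArmendariz_of_ideal_le_jacobson {R : Type*} [Ring R]
    (I : TwoSidedIdeal R)
    (hIJ : ∀ x ∈ I, x ∈ Ideal.jacobson (⊥ : Ideal R))
    (hquot : IsJArmendariz I.ringCon.Quotient) :
    IsJArmendariz R := by
  intro f g hfg i j
  set π : R →+* I.ringCon.Quotient := I.ringCon.mk'
  have h0 : (f.map π) * (g.map π) = 0 := by
    rw [← Polynomial.map_mul, hfg, Polynomial.map_zero]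
  have := hquot (f.map π) (g.map π) h0 i j
  rw [coeff_map, coeff_map, ← map_mul] at this
  exact pullback_jacobson I hIJ _ this
end

section
/- Every local ring is J-Armendariz. -/
open Polynomial

section Aux

variable {R : Type*} [Ring R] [IsLocalRing R]

/-- In a local ring, a right-invertible element is a unit. -/
lemma isUnit_of_mul_eq_one_left' {a b : R} (h : a * b = 1) : IsUnit a := by
  have hidem : (b * a) * (b * a) = b * a := by
    calc (b * a) * (b * a) = b * (a * b) * a := by noncomm_ring
    _ = b * a := by rw [h]; noncomm_ring
  rcases IsLocalRing.isUnit_or_isUnit_of_add_one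
      (show b * a + (1 - b * a) = 1 by abel) with hu | hu
  · obtain ⟨u, hu⟩ := hu
    -- left inverse for a : (↑u⁻¹ * b) * a = 1
    have hleft : (↑u⁻¹ * b) * a = 1 := by
      rw [mul_assoc, ← hu, Units.inv_mul]
    -- a has left inverse ↑u⁻¹*b and right inverse b, hence unit
    have heq : (↑u⁻¹ * b : R) = b := by
      calc (↑u⁻¹ * b : R) = (↑u⁻¹ * b) * (a * b) := by rw [h]; noncomm_ring
      _ = ((↑u⁻¹ * b) * a) * b := by noncomm_ring
      _ = b := by rw [hleft]; noncomm_ring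
    exact ⟨⟨a, b, h, heq ▸ hleft⟩, rfl⟩
  · exfalso
    obtain ⟨u, hu⟩ := hu
    have h0 : (↑u⁻¹ : R) * ((1 - b * a) * (b * a)) = ↑u⁻¹ * 0 := by
      rw [sub_mul, one_mul, hidem, sub_self, mul_zero]
    rw [← mul_assoc, ← hu, Units.inv_mul, one_mul, mul_zero] at h0
    -- b * a = 0, then a = a*b*a = a * 0 = 0? : a = (a*b)*a = a*(b*a) = 0
    have ha : a = 0 := by
      calc a = (a * b) * a := by rw [h]; noncomm_ring
      _ = a * (b * a) := by noncomm_ring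
      _ = 0 := by rw [h0, mul_zero]
    rw [ha, zero_mul] at h
    exact one_ne_zero h.symm

/-- In a local ring, a left-invertible element is a unit. -/
lemma isUnit_of_mul_eq_one_right' {a b : R} (h : a * b = 1) : IsUnit b := by
  have hidem : (b * a) * (b * a) = b * a := by
    calc (b * a) * (b * a) = b * (a * b) * a := by noncomm_ring
    _ = b * a := by rw [h]; noncomm_ring
  rcases IsLocalRing.isUnit_or_isUnit_of_add_one
      (show b * a + (1 - b * a) = 1 by abel) with hu | hu
  · obtain ⟨u, hu⟩ := hu
    have hright : b * (a * ↑u⁻¹) = 1 := by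
      rw [← mul_assoc, ← hu, Units.mul_inv]
    have heq : (a * ↑u⁻¹ : R) = a := by
      calc (a * ↑u⁻¹ : R) = (a * b) * (a * ↑u⁻¹) := by rw [h]; noncomm_ring
      _ = a * (b * (a * ↑u⁻¹)) := by noncomm_ring
      _ = a := by rw [hright]; noncomm_ring
    exact ⟨⟨b, a, heq ▸ hright, h⟩, rfl⟩
  · exfalso
    obtain ⟨u, hu⟩ := hu
    have h0 : (↑u⁻¹ : R) * ((1 - b * a) * (b * a)) = ↑u⁻¹ * 0 := by
      rw [sub_mul, one_mul, hidem, sub_self, mul_zero]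
    rw [← mul_assoc, ← hu, Units.inv_mul, one_mul, mul_zero] at h0
    have hb : b = 0 := by
      calc b = b * (a * b) := by rw [h]; noncomm_ring
      _ = (b * a) * b := by noncomm_ring
      _ = 0 := by rw [h0, zero_mul]
    rw [hb, mul_zero] at h
    exact one_ne_zero h.symm

lemma not_isUnit_mul_left' {a : R} (b : R) (ha : ¬ IsUnit a) : ¬ IsUnit (a * b) := by
  intro h
  obtain ⟨u, hu⟩ := h
  exact ha (isUnit_of_mul_eq_one_left'
    (show a * (b * ↑u⁻¹) = 1 by rw [← mul_assoc, ← hu, Units.mul_inv]))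

lemma not_isUnit_mul_right' (a : R) {b : R} (hb : ¬ IsUnit b) : ¬ IsUnit (a * b) := by
  intro h
  obtain ⟨u, hu⟩ := h
  exact hb (isUnit_of_mul_eq_one_right'
    (show (↑u⁻¹ * a) * b = 1 by rw [mul_assoc, ← hu, Units.inv_mul]))

/-- In a local ring, every nonunit lies in the Jacobson radical. -/
lemma mem_jacobson_bot_of_not_isUnit' {x : R} (hx : ¬ IsUnit x) :
    x ∈ Ideal.jacobson (⊥ : Ideal R) := by
  rw [Ideal.mem_jacobson_iff]
  intro y
  have hyx : ¬ IsUnit (y * x) := not_isUnit_mul_right' y hx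
  have hneg : ¬ IsUnit (-(y * x)) := by
    rwa [IsUnit.neg_iff]
  rcases IsLocalRing.isUnit_or_isUnit_of_add_one
      (show -(y * x) + (y * x + 1) = 1 by abel) with hu | hu
  · exact absurd hu hneg
  · obtain ⟨u, hu⟩ := hu
    refine ⟨↑u⁻¹, ?_⟩
    have : (↑u⁻¹ : R) * (y * x + 1) = 1 := by rw [← hu, Units.inv_mul]
    rw [Ideal.mem_bot]
    calc (↑u⁻¹ : R) * y * x + ↑u⁻¹ - 1 = ↑u⁻¹ * (y * x + 1) - 1 := by noncomm_ring
    _ = 0 := by rw [this, sub_self]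

lemma not_isUnit_add' {a b : R} (ha : ¬ IsUnit a) (hb : ¬ IsUnit b) :
    ¬ IsUnit (a + b) := by
  intro h
  obtain ⟨u, hu⟩ := h
  have h1 : (↑u⁻¹ : R) * a + ↑u⁻¹ * b = 1 := by
    rw [← mul_add, ← hu, Units.inv_mul]
  rcases IsLocalRing.isUnit_or_isUnit_of_add_one h1 with h2 | h2
  · exact ha (by
      have : a = ↑u * (↑u⁻¹ * a) := by rw [← mul_assoc, Units.mul_inv, one_mul]
      rw [this]; exact u.isUnit.mul h2)
  · exact hb (by
      have : b = ↑u * (↑u⁻¹ * b) := by rw [← mul_assoc, Units.mul_inv, one_mul]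
      rw [this]; exact u.isUnit.mul h2)

end Aux

theorem isJArmendariz_of_isLocalRing (R : Type*) [Ring R] [IsLocalRing R] :
    IsJArmendariz R := by
  classical
  intro f g hfg i j
  by_contra hmem
  -- the product must be a unit
  have hunit : IsUnit (f.coeff i * g.coeff j) := by
    by_contra h
    exact hmem (mem_jacobson_bot_of_not_isUnit' h)
  obtain ⟨u, hu⟩ := hunit
  have ha : IsUnit (f.coeff i) :=
    isUnit_of_mul_eq_one_left'
      (show f.coeff i * (g.coeff j * ↑u⁻¹) = 1 by
        rw [← mul_assoc, ← hu, Units.mul_inv])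
  have hb : IsUnit (g.coeff j) :=
    isUnit_of_mul_eq_one_right'
      (show (↑u⁻¹ * f.coeff i) * g.coeff j = 1 by
        rw [mul_assoc, ← hu, Units.inv_mul])
  have exI : ∃ k, IsUnit (f.coeff k) := ⟨i, ha⟩
  have exJ : ∃ k, IsUnit (g.coeff k) := ⟨j, hb⟩
  set i0 := Nat.find exI with hi0
  set j0 := Nat.find exJ with hj0
  have hai0 : IsUnit (f.coeff i0) := Nat.find_spec exI
  have hbj0 : IsUnit (g.coeff j0) := Nat.find_spec exJ
  have h0 : (f * g).coeff (i0 + j0) = 0 := by rw [hfg, coeff_zero]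
  rw [coeff_mul] at h0
  have hmem0 : ((i0, j0) : ℕ × ℕ) ∈ Finset.HasAntidiagonal.antidiagonal (i0 + j0) := by
    simp [Finset.HasAntidiagonal.mem_antidiagonal]
  rw [← Finset.add_sum_erase _ _ hmem0] at h0
  set S := ∑ x ∈ (Finset.HasAntidiagonal.antidiagonal (i0 + j0)).erase (i0, j0),
      f.coeff x.1 * g.coeff x.2 with hS
  have hsum : ¬ IsUnit S := by
    rw [hS]
    refine Finset.sum_induction _ (fun r => ¬ IsUnit r) ?_ ?_ ?_
    · exact fun a b hna hnb => not_isUnit_add' hna hnb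
    · intro h
      exact one_ne_zero (isUnit_zero_iff.mp h).symm
    · intro x hx
      obtain ⟨hne, hx⟩ := Finset.mem_erase.mp hx
      have hadd : x.1 + x.2 = i0 + j0 := Finset.HasAntidiagonal.mem_antidiagonal.mp hx
      rcases lt_trichotomy x.1 i0 with hlt | heq | hgt
      · exact not_isUnit_mul_left' _ (Nat.find_min exI hlt)
      · exfalso
        apply hne
        have : x.2 = j0 := by omega
        exact Prod.ext heq this
      · have hlt2 : x.2 < j0 := by omega
        exact not_isUnit_mul_right' _ (Nat.find_min exJ hlt2)
  have heqneg : f.coeff i0 * g.coeff j0 = -S := eq_neg_of_add_eq_zero_left h0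
  have : IsUnit (-S) := heqneg ▸ hai0.mul hbj0
  exact hsum ((IsUnit.neg_iff S).mp this)
end

section
/- A product of two rings R₁ × R₂ is J-Armendariz if and only if both R₁ and R₂ are J-Armendariz. -/
open Polynomial

section Aux

variable {R₁ R₂ : Type*} [Ring R₁] [Ring R₂]

lemma mem_jacobson_bot_prod (x : R₁ × R₂) :
    x ∈ Ideal.jacobson (⊥ : Ideal (R₁ × R₂)) ↔
      x.1 ∈ Ideal.jacobson (⊥ : Ideal R₁) ∧ x.2 ∈ Ideal.jacobson (⊥ : Ideal R₂) := by
  simp only [Ideal.mem_jacobson_iff, Ideal.mem_bot]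
  constructor
  · intro h
    constructor
    · intro y
      obtain ⟨z, hz⟩ := h (y, 0)
      exact ⟨z.1, by simpa [Prod.ext_iff] using congrArg Prod.fst hz⟩
    · intro y
      obtain ⟨z, hz⟩ := h (0, y)
      exact ⟨z.2, by simpa [Prod.ext_iff] using congrArg Prod.snd hz⟩
  · rintro ⟨h₁, h₂⟩ y
    obtain ⟨z₁, hz₁⟩ := h₁ y.1
    obtain ⟨z₂, hz₂⟩ := h₂ y.2
    exact ⟨(z₁, z₂), by simp [Prod.ext_iff, hz₁, hz₂]⟩

/-- Embed a polynomial over `R₁` into `(R₁ × R₂)[X]` coefficientwise via `a ↦ (a, 0)`. -/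
noncomputable def inlPoly (f : R₁[X]) : (R₁ × R₂)[X] :=
  ⟨.ofCoeff (f.toFinsupp.coeff.mapRange (fun a => ((a, 0) : R₁ × R₂)) rfl)⟩

@[simp] lemma coeff_inlPoly (f : R₁[X]) (n : ℕ) :
    (inlPoly (R₂ := R₂) f).coeff n = (f.coeff n, 0) := by
  rcases f with ⟨f⟩
  simp [inlPoly, Polynomial.coeff, Finsupp.mapRange_apply]

/-- Embed a polynomial over `R₂` into `(R₁ × R₂)[X]` coefficientwise via `a ↦ (0, a)`. -/
noncomputable def inrPoly (f : R₂[X]) : (R₁ × R₂)[X] :=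
  ⟨.ofCoeff (f.toFinsupp.coeff.mapRange (fun a => ((0, a) : R₁ × R₂)) rfl)⟩

@[simp] lemma coeff_inrPoly (f : R₂[X]) (n : ℕ) :
    (inrPoly (R₁ := R₁) f).coeff n = (0, f.coeff n) := by
  rcases f with ⟨f⟩
  simp [inrPoly, Polynomial.coeff, Finsupp.mapRange_apply]

lemma inlPoly_mul_eq_zero {f g : R₁[X]} (h : f * g = 0) :
    inlPoly (R₂ := R₂) f * inlPoly (R₂ := R₂) g = 0 := by
  ext n
  · have h' : (f * g).coeff n = 0 := by rw [h, coeff_zero]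
    rw [coeff_mul] at h'
    simpa [coeff_mul, Prod.fst_sum] using h'
  · simp [coeff_mul, Prod.snd_sum]

lemma inrPoly_mul_eq_zero {f g : R₂[X]} (h : f * g = 0) :
    inrPoly (R₁ := R₁) f * inrPoly (R₁ := R₁) g = 0 := by
  ext n
  · simp [coeff_mul, Prod.fst_sum]
  · have h' : (f * g).coeff n = 0 := by rw [h, coeff_zero]
    rw [coeff_mul] at h'
    simpa [coeff_mul, Prod.snd_sum] using h'

end Aux

theorem prod_isJArmendariz_iff (R₁ R₂ : Type*) [Ring R₁] [Ring R₂] :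
    IsJArmendariz (R₁ × R₂) ↔ IsJArmendariz R₁ ∧ IsJArmendariz R₂ := by
  constructor
  · intro H
    constructor
    · intro f g hfg i j
      have := H (inlPoly f) (inlPoly g) (inlPoly_mul_eq_zero hfg) i j
      rw [mem_jacobson_bot_prod] at this
      simpa using this.1
    · intro f g hfg i j
      have := H (inrPoly f) (inrPoly g) (inrPoly_mul_eq_zero hfg) i j
      rw [mem_jacobson_bot_prod] at this
      simpa using this.2
  · rintro ⟨H₁, H₂⟩ f g hfg i j
    rw [mem_jacobson_bot_prod]
    constructor
    · have : f.map (RingHom.fst R₁ R₂) * g.map (RingHom.fst R₁ R₂) = 0 := by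
        rw [← Polynomial.map_mul, hfg, Polynomial.map_zero]
      simpa using H₁ _ _ this i j
    · have : f.map (RingHom.snd R₁ R₂) * g.map (RingHom.snd R₁ R₂) = 0 := by
        rw [← Polynomial.map_mul, hfg, Polynomial.map_zero]
      simpa using H₂ _ _ this i j
end

section
/- An arbitrary direct product of rings ∏_{t ∈ I} R_t is J-Armendariz if and only if each ring R_t is J-Armendariz. -/
open Polynomial

/-- Lift a polynomial over `R t` to one over `∀ t, R t` via `Pi.single`. -/
private noncomputable def liftPoly {ι : Type*} {R : ι → Type*} [∀ t, Ring (R t)]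
    [DecidableEq ι] (t : ι) (f : (R t)[X]) : (∀ s, R s)[X] :=
  Polynomial.ofFinsupp (AddMonoidAlgebra.ofCoeff (f.toFinsupp.coeff.mapRange (Pi.single t) (Pi.single_zero t)))

private lemma liftPoly_coeff {ι : Type*} {R : ι → Type*} [∀ t, Ring (R t)]
    [DecidableEq ι] (t : ι) (f : (R t)[X]) (i : ℕ) :
    (liftPoly t f).coeff i = Pi.single t (f.coeff i) := by
  simp [liftPoly, Polynomial.coeff, Finsupp.mapRange_apply]

theorem pi_isJArmendariz_iff {ι : Type*} (R : ι → Type*) [∀ t, Ring (R t)] :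
    IsJArmendariz (∀ t, R t) ↔ ∀ t, IsJArmendariz (R t) := by
  classical
  constructor
  · intro H t f g hfg i j
    have hFG : liftPoly t f * liftPoly t g = 0 := by
      ext n
      rw [Polynomial.coeff_mul, Polynomial.coeff_zero]
      have hc : ∀ p ∈ Finset.HasAntidiagonal.antidiagonal n,
          (liftPoly t f).coeff p.1 * (liftPoly t g).coeff p.2
            = Pi.single t (f.coeff p.1 * g.coeff p.2) := by
        intro p _
        rw [liftPoly_coeff, liftPoly_coeff, ← Pi.single_mul]
      rw [Finset.sum_congr rfl hc]
      rename_i s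
      rw [Finset.sum_apply, Pi.zero_apply]
      by_cases hs : s = t
      · subst hs
        simp only [Pi.single_eq_same, ← Polynomial.coeff_mul, hfg,
          Polynomial.coeff_zero, Pi.zero_apply]
      · simp [Pi.single_apply, hs]
    have key := H (liftPoly t f) (liftPoly t g) hFG i j
    rw [Ideal.mem_jacobson_iff] at key ⊢
    intro y
    obtain ⟨z, hz⟩ := key (Pi.single t y)
    refine ⟨z t, ?_⟩
    rw [Ideal.mem_bot] at hz ⊢
    have := congrFun hz t
    simpa [liftPoly_coeff, ← Pi.single_mul] using this
  · intro h f g hfg i j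
    rw [Ideal.mem_jacobson_iff]
    intro y
    have key : ∀ t, ∃ z : R t, z * y t * (f.coeff i t * g.coeff j t) + z - 1 = 0 := by
      intro t
      have hm : (f.map (Pi.evalRingHom R t)) * (g.map (Pi.evalRingHom R t)) = 0 := by
        rw [← Polynomial.map_mul, hfg, Polynomial.map_zero]
      have ht := h t _ _ hm i j
      rw [Ideal.mem_jacobson_iff] at ht
      obtain ⟨z, hz⟩ := ht (y t)
      rw [Ideal.mem_bot] at hz
      exact ⟨z, by simpa using hz⟩
    choose z hz using key
    refine ⟨z, ?_⟩
    rw [Ideal.mem_bot]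
    funext t
    simpa using hz t
end

section
/- Let R and S be rings, M an (R,S)-bimodule, and T the triangular matrix ring of matrices (r, m; 0, s) with r ∈ R, m ∈ M, s ∈ S. Then T is J-Armendariz if and only if both R and S are J-Armendariz. -/
open Polynomial

/-- The formal triangular matrix ring `[[R, M], [0, S]]` built from rings `R`, `S` and an
`(R,S)`-bimodule `M` (a left `R`-module and a right `S`-module, with commuting actions). -/
@[ext]
structure Tri (R M S : Type*) where
  r : R
  m : M
  s : S

set_option linter.unusedSectionVars false

namespace Tri

variable {R M S : Type*} [Ring R] [Ring S] [AddCommGroup M]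
  [Module R M] [Module Sᵐᵒᵖ M] [SMulCommClass R Sᵐᵒᵖ M]

instance : Add (Tri R M S) := ⟨fun a b => ⟨a.r + b.r, a.m + b.m, a.s + b.s⟩⟩
instance : Zero (Tri R M S) := ⟨⟨0, 0, 0⟩⟩
instance : Neg (Tri R M S) := ⟨fun a => ⟨-a.r, -a.m, -a.s⟩⟩
instance : One (Tri R M S) := ⟨⟨1, 0, 1⟩⟩
instance : Mul (Tri R M S) :=
  ⟨fun a b => ⟨a.r * b.r, a.r • b.m + MulOpposite.op b.s • a.m, a.s * b.s⟩⟩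

@[simp] theorem add_def (a b : Tri R M S) :
    a + b = ⟨a.r + b.r, a.m + b.m, a.s + b.s⟩ := rfl
@[simp] theorem mul_def (a b : Tri R M S) :
    a * b = ⟨a.r * b.r, a.r • b.m + MulOpposite.op b.s • a.m, a.s * b.s⟩ := rfl
@[simp] theorem zero_def : (0 : Tri R M S) = ⟨0, 0, 0⟩ := rfl
@[simp] theorem one_def : (1 : Tri R M S) = ⟨1, 0, 1⟩ := rfl
@[simp] theorem neg_def (a : Tri R M S) : -a = ⟨-a.r, -a.m, -a.s⟩ := rfl

instance : Ring (Tri R M S) where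
  add_assoc a b c := by ext <;> simp [add_assoc]
  zero_add a := by ext <;> simp
  add_zero a := by ext <;> simp
  add_comm a b := by ext <;> simp [add_comm]
  neg_add_cancel a := by ext <;> simp
  mul_assoc a b c := by
    ext <;> simp [mul_assoc, mul_smul, smul_add, smul_comm, add_assoc]
  one_mul a := by ext <;> simp
  mul_one a := by ext <;> simp
  left_distrib a b c := by ext <;> simp [mul_add, smul_add, add_smul, add_add_add_comm]
  right_distrib a b c := by ext <;> simp [add_mul, add_smul, add_add_add_comm]
  zero_mul a := by ext <;> simp
  mul_zero a := by ext <;> simp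
  nsmul := nsmulRec
  zsmul := zsmulRec

end Tri

section JacNC

variable {A : Type*} [Ring A]

lemma exists_left_inv_one_add {a : A} (ha : a ∈ Ideal.jacobson (⊥ : Ideal A)) :
    ∃ z : A, z * (1 + a) = 1 := by
  obtain ⟨z, hz⟩ := Ideal.mem_jacobson_iff.mp ha 1
  rw [Ideal.mem_bot] at hz
  refine ⟨z, ?_⟩
  have h1 : z * (1 + a) - 1 = z * 1 * a + z - 1 := by noncomm_ring
  have h2 := h1.trans hz
  rwa [sub_eq_zero] at h2

lemma isUnit_one_add_of_mem_jacobson_bot {a : A}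
    (ha : a ∈ Ideal.jacobson (⊥ : Ideal A)) : IsUnit (1 + a) := by
  obtain ⟨z, hz⟩ := exists_left_inv_one_add ha
  have hz' : z = 1 + -(z * a) := by
    have h : z * (1 + a) = z + z * a := by noncomm_ring
    rw [h] at hz
    have : z + z * a - z * a = 1 - z * a := by rw [hz]
    rw [add_sub_cancel_right, sub_eq_add_neg] at this
    exact this
  have hmem : -(z * a) ∈ Ideal.jacobson (⊥ : Ideal A) :=
    neg_mem (Ideal.mul_mem_left _ z ha)
  obtain ⟨v, hv⟩ := exists_left_inv_one_add hmem
  have hvz : v * z = 1 := by rw [hz']; exact hv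
  have hveq : v = 1 + a := by
    calc v = v * (z * (1 + a)) := by rw [hz, mul_one]
    _ = v * z * (1 + a) := by rw [mul_assoc]
    _ = 1 + a := by rw [hvz, one_mul]
  refine isUnit_iff_exists.mpr ⟨z, ?_, hz⟩
  rw [← hveq]; exact hvz

lemma mem_jacobson_bot_iff_nc {x : A} :
    x ∈ Ideal.jacobson (⊥ : Ideal A) ↔ ∀ y : A, IsUnit (1 + y * x) := by
  constructor
  · intro h y
    exact isUnit_one_add_of_mem_jacobson_bot (Ideal.mul_mem_left _ y h)
  · intro h
    refine Ideal.mem_jacobson_iff.mpr fun y => ?_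
    obtain ⟨u, hu⟩ := h y
    refine ⟨↑u⁻¹, ?_⟩
    rw [Ideal.mem_bot, sub_eq_zero]
    have : (↑u⁻¹ : A) * (1 + y * x) = 1 := by rw [← hu]; exact u.inv_mul
    calc (↑u⁻¹ : A) * y * x + ↑u⁻¹ = ↑u⁻¹ * (1 + y * x) := by noncomm_ring
    _ = 1 := this

end JacNC

section TriAux

variable {R M S : Type*} [Ring R] [Ring S] [AddCommGroup M]
  [Module R M] [Module Sᵐᵒᵖ M] [SMulCommClass R Sᵐᵒᵖ M]

/-- Projection onto the `R` component as a ring hom. -/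
def Tri.fst : Tri R M S →+* R where
  toFun := Tri.r
  map_one' := rfl
  map_mul' _ _ := rfl
  map_zero' := rfl
  map_add' _ _ := rfl

/-- Projection onto the `S` component as a ring hom. -/
def Tri.snd : Tri R M S →+* S where
  toFun := Tri.s
  map_one' := rfl
  map_mul' _ _ := rfl
  map_zero' := rfl
  map_add' _ _ := rfl

@[simp] lemma Tri.fst_apply (a : Tri R M S) : Tri.fst a = a.r := rfl
@[simp] lemma Tri.snd_apply (a : Tri R M S) : Tri.snd a = a.s := rfl

/-- Embedding of `R` as an additive hom. -/
def Tri.inl : R →+ Tri R M S where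
  toFun r := ⟨r, 0, 0⟩
  map_zero' := rfl
  map_add' a b := by ext <;> simp

/-- Embedding of `S` as an additive hom. -/
def Tri.inr : S →+ Tri R M S where
  toFun s := ⟨0, 0, s⟩
  map_zero' := rfl
  map_add' a b := by ext <;> simp

lemma Tri.inl_mul (a b : R) :
    (Tri.inl (M := M) (S := S) a) * Tri.inl b = Tri.inl (a * b) := by
  ext <;> simp [Tri.inl]

lemma Tri.inr_mul (a b : S) :
    (Tri.inr (R := R) (M := M) a) * Tri.inr b = Tri.inr (a * b) := by
  ext <;> simp [Tri.inr]

lemma Tri.mem_jacobson_iff {x : Tri R M S} :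
    x ∈ Ideal.jacobson (⊥ : Ideal (Tri R M S)) ↔
      x.r ∈ Ideal.jacobson (⊥ : Ideal R) ∧ x.s ∈ Ideal.jacobson (⊥ : Ideal S) := by
  constructor
  · intro h
    constructor
    · rw [mem_jacobson_bot_iff_nc]
      intro y
      have := (mem_jacobson_bot_iff_nc.mp h) ⟨y, 0, 0⟩
      have h2 := this.map (Tri.fst (M := M))
      simpa using h2
    · rw [mem_jacobson_bot_iff_nc]
      intro y
      have := (mem_jacobson_bot_iff_nc.mp h) ⟨0, 0, y⟩
      have h2 := this.map (Tri.snd (M := M))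
      simpa using h2
  · rintro ⟨hr, hs⟩
    rw [mem_jacobson_bot_iff_nc]
    intro y
    set w : Tri R M S := 1 + y * x with hw
    obtain ⟨u, hu⟩ := mem_jacobson_bot_iff_nc.mp hr y.r
    obtain ⟨v, hv⟩ := mem_jacobson_bot_iff_nc.mp hs y.s
    have hwr : w.r = ↑u := by simp [hw, hu]
    have hws : w.s = ↑v := by simp [hw, hv]
    refine isUnit_iff_exists.mpr
      ⟨⟨↑u⁻¹, -((MulOpposite.op (↑v⁻¹ : S)) • ((↑u⁻¹ : R) • w.m)), ↑v⁻¹⟩, ?_, ?_⟩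
    · ext
      · simp [hwr, u.mul_inv]
      · show w.r • _ + MulOpposite.op (↑v⁻¹ : S) • w.m = (0 : Tri R M S).m
        rw [hwr]
        rw [smul_neg, smul_comm, smul_smul, u.mul_inv, one_smul]
        simp
      · simp [hws, v.mul_inv]
    · ext
      · simp [hwr, u.inv_mul]
      · show (↑u⁻¹ : R) • w.m + MulOpposite.op w.s • _ = (0 : Tri R M S).m
        rw [hws, smul_neg, smul_smul, ← MulOpposite.op_mul, v.inv_mul]
        simp
      · simp [hws, v.inv_mul]

/-- Map a polynomial coefficientwise along an additive hom. -/
noncomputable def pmapAdd {A B : Type*} [Ring A] [Ring B] (φ : A →+ B) (f : A[X]) : B[X] :=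
  ⟨AddMonoidAlgebra.ofCoeff (Finsupp.mapRange φ φ.map_zero f.toFinsupp.coeff)⟩

@[simp] lemma pmapAdd_coeff {A B : Type*} [Ring A] [Ring B] (φ : A →+ B) (f : A[X]) (n : ℕ) :
    (pmapAdd φ f).coeff n = φ (f.coeff n) := by
  rcases f with ⟨f⟩
  simp [pmapAdd, Polynomial.coeff, AddMonoidAlgebra.coeff_ofCoeff]

lemma pmapAdd_mul_eq_zero {A B : Type*} [Ring A] [Ring B] (φ : A →+ B)
    (hφ : ∀ a b : A, φ a * φ b = φ (a * b)) {f g : A[X]} (h : f * g = 0) :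
    pmapAdd φ f * pmapAdd φ g = 0 := by
  ext k
  rw [Polynomial.coeff_mul, Polynomial.coeff_zero]
  calc ∑ p ∈ Finset.HasAntidiagonal.antidiagonal k, (pmapAdd φ f).coeff p.1 * (pmapAdd φ g).coeff p.2
      = ∑ p ∈ Finset.HasAntidiagonal.antidiagonal k, φ (f.coeff p.1 * g.coeff p.2) := by
        refine Finset.sum_congr rfl fun p _ => ?_
        rw [pmapAdd_coeff, pmapAdd_coeff, hφ]
    _ = φ (∑ p ∈ Finset.HasAntidiagonal.antidiagonal k, f.coeff p.1 * g.coeff p.2) := (map_sum φ _ _).symm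
    _ = φ ((f * g).coeff k) := by rw [Polynomial.coeff_mul]
    _ = 0 := by rw [h, Polynomial.coeff_zero, map_zero]

end TriAux

theorem tri_isJArmendariz_iff (R M S : Type*) [Ring R] [Ring S] [AddCommGroup M]
    [Module R M] [Module Sᵐᵒᵖ M] [SMulCommClass R Sᵐᵒᵖ M] :
    IsJArmendariz (Tri R M S) ↔ IsJArmendariz R ∧ IsJArmendariz S := by
  constructor
  · intro hT
    constructor
    · intro f g h i j
      have h0 := pmapAdd_mul_eq_zero (Tri.inl (M := M) (S := S)) Tri.inl_mul h
      have hm := hT _ _ h0 i j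
      rw [pmapAdd_coeff, pmapAdd_coeff, Tri.inl_mul] at hm
      have := (Tri.mem_jacobson_iff.mp hm).1
      simpa [Tri.inl] using this
    · intro f g h i j
      have h0 := pmapAdd_mul_eq_zero (Tri.inr (R := R) (M := M)) Tri.inr_mul h
      have hm := hT _ _ h0 i j
      rw [pmapAdd_coeff, pmapAdd_coeff, Tri.inr_mul] at hm
      have := (Tri.mem_jacobson_iff.mp hm).2
      simpa [Tri.inr] using this
  · rintro ⟨hR, hS⟩ f g h i j
    rw [Tri.mem_jacobson_iff]
    constructor
    · have h0 : (f.map (Tri.fst (M := M))) * (g.map Tri.fst) = 0 := by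
        rw [← Polynomial.map_mul, h, Polynomial.map_zero]
      have := hR _ _ h0 i j
      simpa [Polynomial.coeff_map] using this
    · have h0 : (f.map (Tri.snd (M := M))) * (g.map Tri.snd) = 0 := by
        rw [← Polynomial.map_mul, h, Polynomial.map_zero]
      have := hS _ _ h0 i j
      simpa [Polynomial.coeff_map] using this
end

section
/- A ring R is J-Armendariz if and only if its trivial extension T(R, R) is J-Armendariz. -/
open Polynomial

section Aux

variable {S : Type*} [Ring S]

lemma aux_left_inv {b : S} (h : b - 1 ∈ Ideal.jacobson (⊥ : Ideal S)) :
    ∃ z : S, z * b = 1 ∧ z - 1 ∈ Ideal.jacobson (⊥ : Ideal S) := by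
  obtain ⟨z, hz⟩ := Ideal.mem_jacobson_iff.1 h 1
  rw [Ideal.mem_bot] at hz
  have hzb : z * b = 1 := by
    have : z * 1 * (b - 1) + z - 1 = z * b - 1 := by noncomm_ring
    rw [this, sub_eq_zero] at hz; exact hz
  refine ⟨z, hzb, ?_⟩
  have : z - 1 = -(z * (b - 1)) := by rw [mul_sub, mul_one, hzb, neg_sub]
  rw [this]
  exact neg_mem (Ideal.mul_mem_left _ z h)

lemma aux_isUnit_of_sub_one_mem_jacobson {a : S}
    (h : a - 1 ∈ Ideal.jacobson (⊥ : Ideal S)) : IsUnit a := by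
  obtain ⟨z, hza, hz⟩ := aux_left_inv h
  obtain ⟨w, hwz, -⟩ := aux_left_inv hz
  have hw : w = a := by
    calc w = w * (z * a) := by rw [hza, mul_one]
    _ = (w * z) * a := by rw [mul_assoc]
    _ = a := by rw [hwz, one_mul]
  exact ⟨⟨a, z, by rw [← hw, hwz], hza⟩, rfl⟩

/-- `fst` as a ring hom for the trivial extension. -/
def fstRingHom (R : Type*) [Ring R] : TrivSqZeroExt R R →+* R where
  toFun := fun x => x.fst
  map_one' := rfl
  map_mul' := fun _ _ => rfl
  map_zero' := rfl
  map_add' := fun _ _ => rfl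

lemma mem_jacobson_trivSqZeroExt {R : Type*} [Ring R] (x : TrivSqZeroExt R R) :
    x ∈ Ideal.jacobson (⊥ : Ideal (TrivSqZeroExt R R)) ↔
      x.fst ∈ Ideal.jacobson (⊥ : Ideal R) := by
  constructor
  · intro h
    rw [Ideal.mem_jacobson_iff]
    intro y
    obtain ⟨z, hz⟩ := Ideal.mem_jacobson_iff.1 h (TrivSqZeroExt.inl y)
    rw [Ideal.mem_bot] at hz
    refine ⟨z.fst, ?_⟩
    rw [Ideal.mem_bot]
    have := congrArg TrivSqZeroExt.fst hz
    simpa [TrivSqZeroExt.fst_mul, TrivSqZeroExt.fst_sub, TrivSqZeroExt.fst_add] using this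
  · intro h
    rw [Ideal.mem_jacobson_iff]
    intro y
    have hw : (y * x + 1 : TrivSqZeroExt R R).fst - 1 ∈ Ideal.jacobson (⊥ : Ideal R) := by
      have : (y * x + 1 : TrivSqZeroExt R R).fst - 1 = y.fst * x.fst := by
        simp [TrivSqZeroExt.fst_mul]
      rw [this]
      exact Ideal.mul_mem_left _ _ h
    have hu : IsUnit (y * x + 1 : TrivSqZeroExt R R) :=
      TrivSqZeroExt.isUnit_iff_isUnit_fst.2 (aux_isUnit_of_sub_one_mem_jacobson hw)
    obtain ⟨u, hu⟩ := hu
    refine ⟨(↑u⁻¹ : TrivSqZeroExt R R), ?_⟩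
    rw [Ideal.mem_bot]
    have : (↑u⁻¹ : TrivSqZeroExt R R) * (y * x + 1) = 1 := Units.inv_mul_of_eq hu
    calc (↑u⁻¹ : TrivSqZeroExt R R) * y * x + ↑u⁻¹ - 1
        = ↑u⁻¹ * (y * x + 1) - 1 := by noncomm_ring
      _ = 0 := by rw [this, sub_self]

end Aux

theorem isJArmendariz_iff_trivSqZeroExt (R : Type*) [Ring R] :
    IsJArmendariz R ↔ IsJArmendariz (TrivSqZeroExt R R) := by
  constructor
  · intro h F G hFG i j
    rw [mem_jacobson_trivSqZeroExt, TrivSqZeroExt.fst_mul]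
    have : F.map (fstRingHom R) * G.map (fstRingHom R) = 0 := by
      rw [← Polynomial.map_mul, hFG, Polynomial.map_zero]
    have := h _ _ this i j
    rw [Polynomial.coeff_map, Polynomial.coeff_map] at this
    exact this
  · intro h f g hfg i j
    have : f.map (TrivSqZeroExt.inlHom R R) * g.map (TrivSqZeroExt.inlHom R R) = 0 := by
      rw [← Polynomial.map_mul, hfg, Polynomial.map_zero]
    have := h _ _ this i j
    rw [mem_jacobson_trivSqZeroExt, TrivSqZeroExt.fst_mul] at this
    simpa [Polynomial.coeff_map] using this
end

section
/- For any n ≥ 1, a ring R is J-Armendariz if and only if the n×n upper triangular matrix ring T_n(R) is J-Armendariz. -/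
open Polynomial

/-- The subring of `n × n` upper triangular matrices over `R`. -/
def upperTriangular (n : ℕ) (R : Type*) [Ring R] :
    Subring (Matrix (Fin n) (Fin n) R) where
  carrier := {M | ∀ i j : Fin n, j < i → M i j = 0}
  zero_mem' _ _ _ := rfl
  one_mem' i j hij := Matrix.one_apply_ne (ne_of_gt hij)
  add_mem' {M N} ha hb i j hij := by
    simp only [Matrix.add_apply, ha i j hij, hb i j hij, add_zero]
  neg_mem' {M} h i j hij := by simp only [Matrix.neg_apply, h i j hij, neg_zero]
  mul_mem' {M N} ha hb := by
    intro i j hij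
    rw [Matrix.mul_apply]
    apply Finset.sum_eq_zero
    intro k _
    rcases lt_or_ge k i with h | h
    · rw [ha i k h, zero_mul]
    · rw [hb k j (lt_of_lt_of_le hij h), mul_zero]

section Aux

/-- In any ring, left-invertibility of `1 + w` for `w` in the Jacobson radical. -/
lemma jac_left_inv {S : Type*} [Ring S] {w : S}
    (hw : w ∈ Ideal.jacobson (⊥ : Ideal S)) : ∃ z : S, z * (1 + w) = 1 := by
  obtain ⟨z, hz⟩ := Ideal.mem_jacobson_iff.mp hw 1
  rw [Ideal.mem_bot] at hz
  rw [mul_one] at hz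
  refine ⟨z, ?_⟩
  have h1 : z * (1 + w) = z * w + z := by rw [mul_add, mul_one, add_comm]
  rw [h1, ← sub_eq_zero]
  exact hz

/-- In any ring, `1 + x` is a unit when `x` is in the Jacobson radical. -/
lemma jac_isUnit_one_add {S : Type*} [Ring S] {x : S}
    (hx : x ∈ Ideal.jacobson (⊥ : Ideal S)) : IsUnit (1 + x) := by
  obtain ⟨z, hz⟩ := jac_left_inv hx
  have hzx : -(z * x) ∈ Ideal.jacobson (⊥ : Ideal S) :=
    neg_mem (Ideal.mul_mem_left _ z hx)
  obtain ⟨v, hv⟩ := jac_left_inv hzx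
  have hz' : (1 : S) + -(z * x) = z := by
    have h2 : z + z * x = 1 := by
      have h3 : z * 1 + z * x = 1 := by rw [← mul_add]; exact hz
      rwa [mul_one] at h3
    have h4 : z = 1 - z * x := by rw [eq_sub_iff_add_eq]; exact h2
    conv_rhs => rw [h4]
    rw [sub_eq_add_neg]
  rw [hz'] at hv
  have hveq : v = 1 + x := by
    calc v = v * (z * (1 + x)) := by rw [hz, mul_one]
    _ = (v * z) * (1 + x) := by rw [mul_assoc]
    _ = 1 + x := by rw [hv, one_mul]
  exact ⟨⟨1 + x, z, by rw [← hveq]; exact hv, hz⟩, rfl⟩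

variable {R : Type*} [Ring R] {n : ℕ}

lemma ut_apply (M : upperTriangular n R) :
    ∀ i j : Fin n, j < i → (M : Matrix (Fin n) (Fin n) R) i j = 0 := M.2

/-- The `k`-th diagonal entry, as a ring hom on upper triangular matrices. -/
def diagEntry (k : Fin n) : upperTriangular n R →+* R where
  toFun M := (M : Matrix (Fin n) (Fin n) R) k k
  map_one' := Matrix.one_apply_eq k
  map_zero' := rfl
  map_add' M N := rfl
  map_mul' M N := by
    show ((M : Matrix (Fin n) (Fin n) R) * N) k k = _
    rw [Matrix.mul_apply, Finset.sum_eq_single k]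
    · intro l _ hl
      rcases lt_or_gt_of_ne hl with h | h
      · rw [ut_apply M k l h, zero_mul]
      · rw [ut_apply N l k h, mul_zero]
    · exact fun h => absurd (Finset.mem_univ k) h

/-- Scalar (diagonal-constant) embedding of `R` into upper triangular matrices. -/
def scalarHom (n : ℕ) : R →+* upperTriangular n R where
  toFun a := ⟨Matrix.diagonal (fun _ => a), fun i j hij =>
    Matrix.diagonal_apply_ne _ (ne_of_gt hij)⟩
  map_one' := Subtype.ext (by
    show Matrix.diagonal _ = 1
    ext i j
    rcases eq_or_ne i j with rfl | h
    · rw [Matrix.diagonal_apply_eq, Matrix.one_apply_eq]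
    · rw [Matrix.diagonal_apply_ne _ h, Matrix.one_apply_ne h])
  map_zero' := Subtype.ext (by
    show Matrix.diagonal _ = 0
    ext i j
    rcases eq_or_ne i j with rfl | h
    · rw [Matrix.diagonal_apply_eq]; rfl
    · rw [Matrix.diagonal_apply_ne _ h]; rfl)
  map_add' a b := Subtype.ext (by
    show Matrix.diagonal _ = Matrix.diagonal _ + Matrix.diagonal _
    rw [Matrix.diagonal_add])
  map_mul' a b := Subtype.ext (by
    show Matrix.diagonal _ = Matrix.diagonal _ * Matrix.diagonal _
    rw [Matrix.diagonal_mul_diagonal])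

lemma diag_scalar (k : Fin n) (r : R) : diagEntry k (scalarHom n r) = r := by
  show Matrix.diagonal (fun _ => r) k k = r
  rw [Matrix.diagonal_apply_eq]

lemma strict_pow (M : Matrix (Fin n) (Fin n) R)
    (h : ∀ i j : Fin n, (j : ℕ) ≤ i → M i j = 0) :
    ∀ (k : ℕ) (i j : Fin n), (j : ℕ) < i + k → (M ^ k) i j = 0 := by
  intro k
  induction k with
  | zero =>
    intro i j hij
    rw [pow_zero]
    exact Matrix.one_apply_ne (fun e => by subst e; omega)
  | succ k ih =>
    intro i j hij
    rw [pow_succ, Matrix.mul_apply]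
    apply Finset.sum_eq_zero
    intro l _
    rcases lt_or_ge (l : ℕ) ((i : ℕ) + k) with hl | hl
    · rw [ih i l hl, zero_mul]
    · rw [h l j (by omega), mul_zero]

lemma strict_nilpotent (M : Matrix (Fin n) (Fin n) R)
    (h : ∀ i j : Fin n, (j : ℕ) ≤ i → M i j = 0) : M ^ n = 0 := by
  ext i j
  rw [strict_pow M h n i j (by omega), Matrix.zero_apply]

lemma isUnit_of_diag (A : upperTriangular n R)
    (h : ∀ k, IsUnit ((A : Matrix (Fin n) (Fin n) R) k k)) : IsUnit A := by
  choose u hu using h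
  set dinv : Fin n → R := fun k => (((u k)⁻¹ : Rˣ) : R) with hdinv
  set dd : Fin n → R := fun k => ((u k : Rˣ) : R) with hdd
  set Dinv : upperTriangular n R := ⟨Matrix.diagonal dinv,
    fun i j hij => Matrix.diagonal_apply_ne _ (ne_of_gt hij)⟩ with hDinv
  set D : upperTriangular n R := ⟨Matrix.diagonal dd,
    fun i j hij => Matrix.diagonal_apply_ne _ (ne_of_gt hij)⟩ with hD
  have hDD : Dinv * D = 1 := Subtype.ext (by
    show Matrix.diagonal _ * Matrix.diagonal _ = 1
    rw [Matrix.diagonal_mul_diagonal]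
    ext i j
    rcases eq_or_ne i j with rfl | hne
    · rw [Matrix.diagonal_apply_eq, Matrix.one_apply_eq]
      exact (u i).inv_mul
    · rw [Matrix.diagonal_apply_ne _ hne, Matrix.one_apply_ne hne])
  have hDD' : D * Dinv = 1 := Subtype.ext (by
    show Matrix.diagonal _ * Matrix.diagonal _ = 1
    rw [Matrix.diagonal_mul_diagonal]
    ext i j
    rcases eq_or_ne i j with rfl | hne
    · rw [Matrix.diagonal_apply_eq, Matrix.one_apply_eq]
      exact (u i).mul_inv
    · rw [Matrix.diagonal_apply_ne _ hne, Matrix.one_apply_ne hne])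
  set B : upperTriangular n R := Dinv * A with hB
  set E : upperTriangular n R := B - 1 with hE
  have hBc : (B : Matrix (Fin n) (Fin n) R) = Matrix.diagonal dinv * A := rfl
  have hEc : (E : Matrix (Fin n) (Fin n) R) = (B : Matrix (Fin n) (Fin n) R) - 1 := rfl
  have hEstrict : ∀ i j : Fin n, (j : ℕ) ≤ i → (E : Matrix (Fin n) (Fin n) R) i j = 0 := by
    intro i j hij
    rcases eq_or_lt_of_le hij with heq | hlt
    · have hij' : i = j := Fin.ext heq.symm
      subst hij'
      rw [hEc, Matrix.sub_apply, hBc, Matrix.diagonal_mul, ← hu i, Matrix.one_apply_eq]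
      show (((u i)⁻¹ : Rˣ) : R) * ((u i : Rˣ) : R) - 1 = 0
      rw [(u i).inv_mul, sub_self]
    · have hlt' : j < i := hlt
      rw [hEc, Matrix.sub_apply, ut_apply B i j hlt', Matrix.one_apply_ne (ne_of_gt hlt'),
        sub_zero]
  have hnil : IsNilpotent E := by
    refine ⟨n, Subtype.ext ?_⟩
    have hpow : ((E ^ n : upperTriangular n R) : Matrix (Fin n) (Fin n) R)
        = (E : Matrix (Fin n) (Fin n) R) ^ n := SubmonoidClass.coe_pow E n
    rw [hpow]
    exact strict_nilpotent _ hEstrict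
  have hBunit : IsUnit B := by
    have h1 := hnil.isUnit_add_one
    rwa [hE, sub_add_cancel] at h1
  have hDunit : IsUnit D := ⟨⟨D, Dinv, hDD', hDD⟩, rfl⟩
  have hA : A = D * B := by
    rw [hB, ← mul_assoc, hDD', one_mul]
  rw [hA]
  exact hDunit.mul hBunit

lemma mem_jac_of_diag (M : upperTriangular n R)
    (h : ∀ k, (M : Matrix (Fin n) (Fin n) R) k k ∈ Ideal.jacobson (⊥ : Ideal R)) :
    M ∈ Ideal.jacobson (⊥ : Ideal (upperTriangular n R)) := by
  rw [Ideal.mem_jacobson_iff]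
  intro Y
  set P : upperTriangular n R := 1 + Y * M with hP
  have hPunit : IsUnit P := by
    apply isUnit_of_diag
    intro k
    have hd : (P : Matrix (Fin n) (Fin n) R) k k
        = 1 + (Y : Matrix (Fin n) (Fin n) R) k k * (M : Matrix (Fin n) (Fin n) R) k k := by
      have h1 := map_add (diagEntry (R := R) k) 1 (Y * M)
      rw [map_mul, map_one] at h1
      exact h1
    rw [hd]
    exact jac_isUnit_one_add (Ideal.mul_mem_left _ _ (h k))
  obtain ⟨p, hp⟩ := hPunit
  refine ⟨(p⁻¹ : _ˣ), ?_⟩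
  rw [Ideal.mem_bot]
  have h2 : ((p⁻¹ : _ˣ) : upperTriangular n R) * P = 1 := by rw [← hp]; exact p.inv_mul
  rw [hP] at h2
  rw [← sub_eq_zero.mpr h2]
  noncomm_ring

end Aux

theorem isJArmendariz_iff_upperTriangular (R : Type*) [Ring R] (n : ℕ) (hn : 1 ≤ n) :
    IsJArmendariz R ↔ IsJArmendariz (upperTriangular n R) := by
  constructor
  · intro hR F G hFG i j
    apply mem_jac_of_diag
    intro k
    have h1 : (F.map (diagEntry k)) * (G.map (diagEntry k)) = 0 := by
      rw [← Polynomial.map_mul, hFG, Polynomial.map_zero]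
    have h2 := hR _ _ h1 i j
    rw [Polynomial.coeff_map, Polynomial.coeff_map, ← map_mul] at h2
    exact h2
  · intro hT f g hfg i j
    have h1 : (f.map (scalarHom n)) * (g.map (scalarHom n)) = 0 := by
      rw [← Polynomial.map_mul, hfg, Polynomial.map_zero]
    have h2 := hT _ _ h1 i j
    rw [Polynomial.coeff_map, Polynomial.coeff_map, ← map_mul] at h2
    rw [Ideal.mem_jacobson_iff]
    intro y
    obtain ⟨Z, hZ⟩ := Ideal.mem_jacobson_iff.mp h2 (scalarHom n y)
    rw [Ideal.mem_bot] at hZ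
    refine ⟨diagEntry (⟨0, hn⟩ : Fin n) Z, ?_⟩
    rw [Ideal.mem_bot]
    have h3 := congrArg (diagEntry (⟨0, hn⟩ : Fin n)) hZ
    rw [map_sub, map_add, map_mul, map_mul, map_one, map_zero, diag_scalar] at h3
    rwa [diag_scalar] at h3
end

section
/- If R is an Armendariz ring, then for any n the upper triangular matrix ring T_n(R) is J-Armendariz. -/
open Polynomial

/-- A ring is Armendariz if `f * g = 0` in `R[X]` implies all coefficient products vanish. -/
def IsArmendariz (R : Type*) [Ring R] : Prop :=
  ∀ f g : R[X], f * g = 0 → ∀ i j : ℕ, f.coeff i * g.coeff j = 0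

section AuxJA

variable {R : Type*} [Ring R] {n : ℕ}

private lemma ja_strict_pow_aux (M : Matrix (Fin n) (Fin n) R)
    (h : ∀ i j : Fin n, (j : ℕ) ≤ (i : ℕ) → M i j = 0) :
    ∀ k : ℕ, ∀ i j : Fin n, (j : ℕ) < (i : ℕ) + k → (M ^ k) i j = 0 := by
  intro k
  induction k with
  | zero =>
    intro i j hij
    simp only [pow_zero]
    exact Matrix.one_apply_ne (by rintro rfl; omega)
  | succ k ih =>
    intro i j hij
    rw [pow_succ', Matrix.mul_apply]
    apply Finset.sum_eq_zero
    intro l _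
    rcases le_or_gt (l : ℕ) (i : ℕ) with hl | hl
    · rw [h i l hl, zero_mul]
    · rw [ih l j (by omega), mul_zero]

private lemma ja_strict_pow_zero (M : Matrix (Fin n) (Fin n) R)
    (h : ∀ i j : Fin n, (j : ℕ) ≤ (i : ℕ) → M i j = 0) : M ^ n = 0 := by
  ext i j
  exact ja_strict_pow_aux M h n i j (by omega)

/-- The `k`-th diagonal entry, as a ring hom on upper triangular matrices. -/
private def ja_diagHom (n : ℕ) (R : Type*) [Ring R] (k : Fin n) :
    upperTriangular n R →+* R where
  toFun M := (M : Matrix (Fin n) (Fin n) R) k k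
  map_one' := Matrix.one_apply_eq k
  map_mul' M N := by
    show ((M : Matrix (Fin n) (Fin n) R) * (N : Matrix (Fin n) (Fin n) R)) k k = _
    rw [Matrix.mul_apply]
    apply Finset.sum_eq_single_of_mem k (Finset.mem_univ k)
    intro l _ hl
    rcases lt_or_gt_of_ne hl with hlt | hgt
    · rw [M.2 k l hlt, zero_mul]
    · rw [N.2 l k hgt, mul_zero]
  map_zero' := rfl
  map_add' M N := rfl

/-- An upper triangular matrix with zero diagonal lies in the Jacobson radical. -/
private lemma ja_mem_jacobson (x : upperTriangular n R)
    (hx : ∀ k : Fin n, (x : Matrix (Fin n) (Fin n) R) k k = 0) :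
    x ∈ Ideal.jacobson (⊥ : Ideal (upperTriangular n R)) := by
  rw [Ideal.mem_jacobson_iff]
  intro y
  -- `y * x` has zero diagonal, hence is strictly upper triangular, hence nilpotent
  have hdiag : ∀ i j : Fin n, (j : ℕ) ≤ (i : ℕ) →
      ((y * x : upperTriangular n R) : Matrix (Fin n) (Fin n) R) i j = 0 := by
    intro i j hij
    rcases eq_or_lt_of_le hij with heq | hlt
    · have hji : j = i := Fin.ext heq
      subst hji
      have := map_mul (ja_diagHom n R j) y x
      simp only [ja_diagHom, RingHom.coe_mk, MonoidHom.coe_mk, OneHom.coe_mk] at this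
      exact this.trans (by
        show (y : Matrix (Fin n) (Fin n) R) j j * (x : Matrix (Fin n) (Fin n) R) j j = 0
        rw [hx j, mul_zero])
    · exact (y * x).2 i j hlt
  have hnil : IsNilpotent (y * x) := by
    refine ⟨n, ?_⟩
    ext1
    push_cast
    exact ja_strict_pow_zero _ hdiag
  obtain ⟨u, hu⟩ := hnil.isUnit_add_one
  refine ⟨(↑u⁻¹ : upperTriangular n R), ?_⟩
  have : (↑u⁻¹ : upperTriangular n R) * (y * x + 1) = 1 := by rw [← hu, u.inv_mul]
  rw [Submodule.mem_bot, sub_eq_zero, mul_assoc, ← this, mul_add, mul_one]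

end AuxJA

theorem upperTriangular_isJArmendariz_of_isArmendariz (R : Type*) [Ring R]
    (h : IsArmendariz R) (n : ℕ) : IsJArmendariz (upperTriangular n R) := by
  intro f g hfg i j
  apply ja_mem_jacobson
  intro k
  have hmap : f.map (ja_diagHom n R k) * g.map (ja_diagHom n R k) = 0 := by
    rw [← Polynomial.map_mul, hfg, Polynomial.map_zero]
  have := h _ _ hmap i j
  rw [Polynomial.coeff_map, Polynomial.coeff_map, ← map_mul] at this
  exact this
end

section
/- For a field F, the 2×2 upper triangular matrix ring T₂(F) is a J-Armendariz ring that is not abelian: the idempotent E₂₂ = (0,0;0,1) is not central. -/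
open Polynomial

/-- The `k`-th diagonal entry, as a ring hom on upper triangular matrices. -/
def diagHom (n : ℕ) (R : Type*) [Ring R] (k : Fin n) : upperTriangular n R →+* R where
  toFun M := (M : Matrix (Fin n) (Fin n) R) k k
  map_one' := by simp [Matrix.one_apply]
  map_mul' M N := by
    show ((M : Matrix (Fin n) (Fin n) R) * (N : Matrix (Fin n) (Fin n) R)) k k = _
    rw [Matrix.mul_apply, Finset.sum_eq_single k]
    · intro l _ hl
      rcases lt_or_gt_of_ne hl with h | h
      · rw [M.2 k l h, zero_mul]
      · rw [N.2 l k h, mul_zero]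
    · intro h; exact absurd (Finset.mem_univ k) h
  map_zero' := rfl
  map_add' M N := rfl

lemma strict_mul_eq_zero {F : Type*} [Field F] (a b : upperTriangular 2 F)
    (ha : ∀ k : Fin 2, (a : Matrix (Fin 2) (Fin 2) F) k k = 0)
    (hb : ∀ k : Fin 2, (b : Matrix (Fin 2) (Fin 2) F) k k = 0) : a * b = 0 := by
  have ha10 : (a : Matrix (Fin 2) (Fin 2) F) 1 0 = 0 := a.2 1 0 (by decide)
  have hb10 : (b : Matrix (Fin 2) (Fin 2) F) 1 0 = 0 := b.2 1 0 (by decide)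
  apply Subtype.ext
  show (a : Matrix (Fin 2) (Fin 2) F) * b = 0
  ext i j
  rw [Matrix.mul_apply, Fin.sum_univ_two]
  have hai0 : (a : Matrix (Fin 2) (Fin 2) F) i 0 = 0 := by
    fin_cases i
    · exact ha 0
    · exact ha10
  have hb1j : (b : Matrix (Fin 2) (Fin 2) F) 1 j = 0 := by
    fin_cases j
    · exact hb10
    · exact hb 1
  rw [hai0, hb1j, zero_mul, mul_zero, add_zero]
  rfl

lemma strict_mem_jacobson {F : Type*} [Field F] (x : upperTriangular 2 F)
    (hx : ∀ k : Fin 2, (x : Matrix (Fin 2) (Fin 2) F) k k = 0) :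
    x ∈ Ideal.jacobson (⊥ : Ideal (upperTriangular 2 F)) := by
  rw [Ideal.mem_jacobson_iff]
  intro y
  set w := y * x with hw
  have hwd : ∀ k : Fin 2, (w : Matrix (Fin 2) (Fin 2) F) k k = 0 := by
    intro k
    have : diagHom 2 F k w = diagHom 2 F k y * diagHom 2 F k x := map_mul _ _ _
    have h2 : diagHom 2 F k w = 0 := by rw [this]; exact mul_eq_zero_of_right _ (hx k)
    exact h2
  have hw2 : w * w = 0 := strict_mul_eq_zero w w hwd hwd
  refine ⟨1 - w, ?_⟩
  rw [Ideal.mem_bot]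
  have : (1 - w) * (y * x) + (1 - w) - 1 = -(w * w) := by rw [← hw]; noncomm_ring
  rw [mul_assoc, this, hw2, neg_zero]

theorem upperTriangular_two_isJArmendariz_not_abelian (F : Type*) [Field F] :
    IsJArmendariz (upperTriangular 2 F) ∧
      ∃ e : upperTriangular 2 F,
        (e : Matrix (Fin 2) (Fin 2) F) = Matrix.single 1 1 (1 : F) ∧
        IsIdempotentElem e ∧ e ∉ Set.center (upperTriangular 2 F) := by
  constructor
  · intro f g hfg i j
    apply strict_mem_jacobson
    intro k
    have hmap : (f.map (diagHom 2 F k)) * (g.map (diagHom 2 F k)) = 0 := by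
      rw [← Polynomial.map_mul, hfg, Polynomial.map_zero]
    have hd : diagHom 2 F k (f.coeff i) * diagHom 2 F k (g.coeff j) = 0 := by
      rcases mul_eq_zero.mp hmap with h | h
      · have : (f.map (diagHom 2 F k)).coeff i = 0 := by rw [h, Polynomial.coeff_zero]
        rw [Polynomial.coeff_map] at this
        rw [this, zero_mul]
      · have : (g.map (diagHom 2 F k)).coeff j = 0 := by rw [h, Polynomial.coeff_zero]
        rw [Polynomial.coeff_map] at this
        rw [this, mul_zero]
    have : diagHom 2 F k (f.coeff i * g.coeff j) = 0 := by
      rw [map_mul, hd]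
    exact this
  · have hmem : Matrix.single 1 1 (1 : F) ∈ upperTriangular 2 F := by
      intro i j hij
      fin_cases i <;> fin_cases j <;> simp_all [Matrix.single]
    refine ⟨⟨Matrix.single 1 1 (1 : F), hmem⟩, rfl, ?_, ?_⟩
    · apply Subtype.ext
      show Matrix.single 1 1 (1 : F) * Matrix.single 1 1 (1 : F) = _
      rw [Matrix.single_mul_single_same, one_mul]
    · intro hc
      have hmem' : Matrix.single 0 1 (1 : F) ∈ upperTriangular 2 F := by
        intro i j hij
        fin_cases i <;> fin_cases j <;> simp_all [Matrix.single]
      have := hc.comm ⟨Matrix.single 0 1 (1 : F), hmem'⟩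
      have h2 := congrArg Subtype.val this
      simp only [Subring.coe_mul] at h2
      rw [Matrix.single_mul_single_of_ne (h := (by decide : (1 : Fin 2) ≠ 0)),
        Matrix.single_mul_single_same, one_mul] at h2
      have := congrFun (congrFun h2 0) 1
      rw [Matrix.single_apply_same] at this
      simp at this
end

section
/- If R is a J-Armendariz ring and e is an idempotent of R, then the corner ring eRe is J-Armendariz. -/
open Polynomial

/-- The corner `eRe` of a ring `R` at an element `e`, realized as the set of
elements absorbed by `e` on both sides. For an idempotent `e` this is a ring
with identity `e`. -/
def Corner {R : Type*} [Ring R] (e : R) : Type _ :=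
  {x : R // e * x = x ∧ x * e = x}

namespace Corner

variable {R : Type*} [Ring R] {e : R}

instance : Add (Corner e) :=
  ⟨fun x y => ⟨x.1 + y.1, by rw [mul_add, x.2.1, y.2.1], by rw [add_mul, x.2.2, y.2.2]⟩⟩

instance : Zero (Corner e) := ⟨⟨0, by simp, by simp⟩⟩

instance : Neg (Corner e) :=
  ⟨fun x => ⟨-x.1, by rw [mul_neg, x.2.1], by rw [neg_mul, x.2.2]⟩⟩

instance : Mul (Corner e) :=
  ⟨fun x y => ⟨x.1 * y.1, by rw [← mul_assoc, x.2.1], by rw [mul_assoc, y.2.2]⟩⟩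

instance [he : Fact (IsIdempotentElem e)] : One (Corner e) := ⟨⟨e, he.out, he.out⟩⟩

instance [Fact (IsIdempotentElem e)] : Ring (Corner e) where
  add_assoc a b c := Subtype.ext (add_assoc a.1 b.1 c.1)
  zero_add a := Subtype.ext (zero_add a.1)
  add_zero a := Subtype.ext (add_zero a.1)
  add_comm a b := Subtype.ext (add_comm a.1 b.1)
  neg_add_cancel a := Subtype.ext (neg_add_cancel a.1)
  mul_assoc a b c := Subtype.ext (mul_assoc a.1 b.1 c.1)
  one_mul a := Subtype.ext a.2.1
  mul_one a := Subtype.ext a.2.2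
  left_distrib a b c := Subtype.ext (left_distrib a.1 b.1 c.1)
  right_distrib a b c := Subtype.ext (right_distrib a.1 b.1 c.1)
  zero_mul a := Subtype.ext (zero_mul a.1)
  mul_zero a := Subtype.ext (mul_zero a.1)
  nsmul := nsmulRec
  zsmul := zsmulRec

end Corner

section Aux

variable {R : Type*} [Ring R] {e : R}

/-- The coefficientwise lift of a polynomial over the corner to a polynomial over `R`. -/
noncomputable def cornerLift [Fact (IsIdempotentElem e)] (f : (Corner e)[X]) : R[X] :=
  ∑ i ∈ f.support, Polynomial.C (f.coeff i).1 * Polynomial.X ^ i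

lemma cornerLift_coeff [Fact (IsIdempotentElem e)] (f : (Corner e)[X]) (n : ℕ) :
    (cornerLift f).coeff n = (f.coeff n).1 := by
  unfold cornerLift
  rw [Polynomial.finset_sum_coeff]
  simp only [Polynomial.coeff_C_mul, Polynomial.coeff_X_pow, mul_ite, mul_one, mul_zero]
  rw [Finset.sum_ite_eq f.support n (fun i => (f.coeff i).1)]
  split_ifs with hn
  · rfl
  · rw [Polynomial.notMem_support_iff] at hn
    rw [hn]; rfl

/-- The valuation map as an additive monoid hom. -/
def cornerValHom (e : R) [Fact (IsIdempotentElem e)] : Corner e →+ R where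
  toFun := Subtype.val
  map_zero' := rfl
  map_add' _ _ := rfl

lemma Corner.val_sum [Fact (IsIdempotentElem e)] {ι : Type*} (s : Finset ι)
    (F : ι → Corner e) : (∑ i ∈ s, F i).1 = ∑ i ∈ s, (F i).1 :=
  map_sum (cornerValHom e) F s

lemma isUnit_add_one_of_mem_jacobson_bot (a : R)
    (ha : a ∈ Ideal.jacobson (⊥ : Ideal R)) : IsUnit (a + 1) := by
  obtain ⟨s, hs⟩ := Ideal.mem_jacobson_iff.1 ha 1
  rw [Ideal.mem_bot, mul_one, sub_eq_zero] at hs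
  -- hs : s * a + s = 1
  have hs1 : s * (a + 1) = 1 := by rw [mul_add, mul_one, hs]
  have hsa : -(s * a) ∈ Ideal.jacobson (⊥ : Ideal R) :=
    Submodule.neg_mem _ (Ideal.mul_mem_left _ s ha)
  obtain ⟨t, ht⟩ := Ideal.mem_jacobson_iff.1 hsa 1
  rw [Ideal.mem_bot, mul_one, sub_eq_zero] at ht
  -- ht : t * -(s*a) + t = 1
  have hts : t * s = 1 := by
    have : s = 1 - s * a := by rw [eq_sub_iff_add_eq, add_comm, hs]
    rw [this, mul_sub, mul_one, ← ht, mul_neg, sub_eq_neg_add]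
  have hteq : t = a + 1 := by
    calc t = t * (s * (a + 1)) := by rw [hs1, mul_one]
      _ = t * s * (a + 1) := by rw [mul_assoc]
      _ = a + 1 := by rw [hts, one_mul]
  exact ⟨⟨a + 1, s, hteq ▸ hts, hs1⟩, rfl⟩

lemma corner_mem_jacobson [he : Fact (IsIdempotentElem e)] (z : Corner e)
    (hz : z.1 ∈ Ideal.jacobson (⊥ : Ideal R)) :
    z ∈ Ideal.jacobson (⊥ : Ideal (Corner e)) := by
  rw [Ideal.mem_jacobson_iff]
  intro y
  set a : R := y.1 * z.1 with ha
  have haJ : a ∈ Ideal.jacobson (⊥ : Ideal R) := Ideal.mul_mem_left _ y.1 hz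
  obtain ⟨u, hu⟩ := isUnit_add_one_of_mem_jacobson_bot a haJ
  -- u : Rˣ, hu : ↑u = a + 1
  have hea : e * a = a := by rw [ha, ← mul_assoc, y.2.1]
  have hae : a * e = a := by rw [ha, mul_assoc, z.2.2]
  have hcomm : e * (u : R) = (u : R) * e := by
    rw [hu, mul_add, add_mul, hea, hae, mul_one, one_mul]
  have hcomm' : e * ((u⁻¹ : Rˣ) : R) = ((u⁻¹ : Rˣ) : R) * e := by
    have h1 : ((u⁻¹ : Rˣ) : R) * (e * (u : R)) * ((u⁻¹ : Rˣ) : R)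
        = e * ((u⁻¹ : Rˣ) : R) := by
      rw [hcomm, ← mul_assoc ((u⁻¹ : Rˣ) : R) (u : R) e, Units.inv_mul, one_mul]
    have h2 : ((u⁻¹ : Rˣ) : R) * (e * (u : R)) * ((u⁻¹ : Rˣ) : R)
        = ((u⁻¹ : Rˣ) : R) * e := by
      rw [← mul_assoc ((u⁻¹ : Rˣ) : R) e (u : R),
        mul_assoc (((u⁻¹ : Rˣ) : R) * e) (u : R) ((u⁻¹ : Rˣ) : R),
        Units.mul_inv, mul_one]
    rw [← h1, h2]
  refine ⟨⟨((u⁻¹ : Rˣ) : R) * e, ?_, ?_⟩, ?_⟩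
  · rw [← mul_assoc, hcomm', mul_assoc, he.out]
  · rw [mul_assoc, he.out]
  · rw [Ideal.mem_bot, sub_eq_zero]
    apply Subtype.ext
    show ((u⁻¹ : Rˣ) : R) * e * y.1 * z.1 + ((u⁻¹ : Rˣ) : R) * e = e
    have key : ((u⁻¹ : Rˣ) : R) * e * (a + 1) = e := by
      rw [← hu, mul_assoc, hcomm, ← mul_assoc, Units.inv_mul, one_mul]
    calc ((u⁻¹ : Rˣ) : R) * e * y.1 * z.1 + ((u⁻¹ : Rˣ) : R) * e
        = ((u⁻¹ : Rˣ) : R) * e * (a + 1) := by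
          rw [mul_add, mul_one, mul_assoc (((u⁻¹ : Rˣ) : R) * e) y.1 z.1, ← ha]
      _ = e := key

end Aux

theorem corner_isJArmendariz {R : Type*} [Ring R] (e : R)
    [Fact (IsIdempotentElem e)] (h : IsJArmendariz R) :
    IsJArmendariz (Corner e) := by
  intro f g hfg i j
  have hFG : cornerLift f * cornerLift g = (0 : R[X]) := by
    ext n
    rw [Polynomial.coeff_mul, Polynomial.coeff_zero]
    simp only [cornerLift_coeff]
    have hval : ((f * g).coeff n).1 = (0 : R) := by
      rw [hfg]; rfl
    rw [Polynomial.coeff_mul] at hval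
    rw [← hval, Corner.val_sum]
    rfl
  have := h (cornerLift f) (cornerLift g) hFG i j
  rw [cornerLift_coeff, cornerLift_coeff] at this
  exact corner_mem_jacobson (f.coeff i * g.coeff j) this
end

section
/- If the polynomial ring R[x] is J-Armendariz, then R is J-Armendariz. -/
open Polynomial

lemma jacobson_C_mem {R : Type*} [Ring R] {a : R}
    (ha : (C a : R[X]) ∈ Ideal.jacobson (⊥ : Ideal R[X])) :
    a ∈ Ideal.jacobson (⊥ : Ideal R) := by
  rw [Ideal.mem_jacobson_iff] at ha ⊢
  intro y
  obtain ⟨Z, hZ⟩ := ha (C y)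
  refine ⟨Z.coeff 0, ?_⟩
  have := congrArg (fun p => p.coeff 0) hZ
  simpa [mul_coeff_zero, coeff_C] using this

theorem isJArmendariz_of_polynomial (R : Type*) [Ring R]
    (h : IsJArmendariz R[X]) : IsJArmendariz R := by
  intro f g hfg i j
  have hmap : (f.map (C : R →+* R[X])) * (g.map C) = 0 := by
    rw [← Polynomial.map_mul, hfg, Polynomial.map_zero]
  have := h _ _ hmap i j
  rw [coeff_map, coeff_map, ← map_mul] at this
  exact jacobson_C_mem this
end

section
/- Suppose R is a J-Armendariz ring and J(R)[x] ⊆ J(R[x]). Then the polynomial ring R[x] is J-Armendariz. -/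
open Polynomial

lemma coeff_eval₂_X_pow {R : Type*} [Ring R] (F : R[X][X]) (t : ℕ)
    (ht : ∀ e, (F.coeff e).natDegree < t) (i k : ℕ) (hk : k < t) :
    (eval₂ (RingHom.id R[X]) (X ^ t) F).coeff (t * i + k) = (F.coeff i).coeff k := by
  rw [eval₂_eq_sum, Polynomial.sum_def, finset_sum_coeff]
  have hterm : ∀ e, ((RingHom.id R[X]) (F.coeff e) * (X ^ t) ^ e).coeff (t * i + k)
      = if t * e ≤ t * i + k then (F.coeff e).coeff (t * i + k - t * e) else 0 := by
    intro e
    rw [RingHom.id_apply, ← pow_mul, coeff_mul_X_pow']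
  rw [Finset.sum_congr rfl fun e _ => hterm e]
  rw [Finset.sum_eq_single i]
  · rw [if_pos (Nat.le_add_right _ _), Nat.add_sub_cancel_left]
  · intro e _ hne
    rcases lt_or_gt_of_ne hne with h | h
    · have h1 : t * (e + 1) ≤ t * i := Nat.mul_le_mul le_rfl h
      have h2 : t * (e + 1) = t * e + t := by ring
      rw [if_pos (by omega)]
      exact coeff_eq_zero_of_natDegree_lt (by have := ht e; omega)
    · have h1 : t * (i + 1) ≤ t * e := Nat.mul_le_mul le_rfl h
      have h2 : t * (i + 1) = t * i + t := by ring
      rw [if_neg (by omega)]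
  · intro hi
    rw [Polynomial.notMem_support_iff.mp hi]
    simp

theorem polynomial_isJArmendariz (R : Type*) [Ring R]
    (hR : IsJArmendariz R)
    (hJ : ∀ f : R[X], (∀ i : ℕ, f.coeff i ∈ Ideal.jacobson (⊥ : Ideal R)) →
      f ∈ Ideal.jacobson (⊥ : Ideal R[X])) :
    IsJArmendariz R[X] := by
  intro F G hFG i j
  have claim : ∀ k l : ℕ, (F.coeff i).coeff k * (G.coeff j).coeff l ∈
      Ideal.jacobson (⊥ : Ideal R) := by
    intro k l
    set A := (Finset.range (F.natDegree + 1)).sup fun e => (F.coeff e).natDegree with hA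
    set B := (Finset.range (G.natDegree + 1)).sup fun e => (G.coeff e).natDegree with hB
    set t := A + B + k + l + 1 with htdef
    have htF : ∀ e, (F.coeff e).natDegree < t := by
      intro e
      by_cases he : e ≤ F.natDegree
      · have : (F.coeff e).natDegree ≤ A :=
          Finset.le_sup (f := fun e => (F.coeff e).natDegree)
            (Finset.mem_range.mpr (by omega))
        omega
      · rw [coeff_eq_zero_of_natDegree_lt (by omega)]
        simp only [natDegree_zero]; omega
    have htG : ∀ e, (G.coeff e).natDegree < t := by
      intro e
      by_cases he : e ≤ G.natDegree
      · have : (G.coeff e).natDegree ≤ B :=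
          Finset.le_sup (f := fun e => (G.coeff e).natDegree)
            (Finset.mem_range.mpr (by omega))
        omega
      · rw [coeff_eq_zero_of_natDegree_lt (by omega)]
        simp only [natDegree_zero]; omega
    have hcomm : ∀ a : R[X], Commute ((RingHom.id R[X]) a) (X ^ t) :=
      fun a => (commute_X a).symm.pow_right t
    let φ : R[X][X] →+* R[X] := eval₂RingHom' (RingHom.id R[X]) (X ^ t) hcomm
    have hφ : ∀ P : R[X][X], φ P = eval₂ (RingHom.id R[X]) (X ^ t) P := fun _ => rfl
    have h0 : φ F * φ G = 0 := by rw [← map_mul, hFG, map_zero]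
    have hmem := hR (φ F) (φ G) h0 (t * i + k) (t * j + l)
    rwa [hφ, hφ, coeff_eval₂_X_pow F t htF i k (by omega),
      coeff_eval₂_X_pow G t htG j l (by omega)] at hmem
  apply hJ
  intro n
  rw [coeff_mul]
  exact Ideal.sum_mem _ fun p _ => claim p.1 p.2
end

section
/- For a commutative ring R, if R[x] is J-Armendariz, then the Laurent polynomial ring R[x, x⁻¹] is J-Armendariz. -/
open Polynomial

/-- In a commutative ring, elements of the Jacobson radical of `S[X]` are nilpotent. -/
lemma isNilpotent_of_mem_jacobson_bot {S : Type*} [CommRing S] {p : S[X]}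
    (hp : p ∈ Ideal.jacobson (⊥ : Ideal S[X])) : IsNilpotent p := by
  have hu : IsUnit (p * X + 1) := (Ideal.mem_jacobson_bot.mp hp) X
  have : p * X + 1 = C 1 + X * p := by ring_nf; rw [map_one, add_comm]
  rw [this, isUnit_C_add_X_mul_iff] at hu
  exact hu.2

/-- Nilpotent elements lie in the Jacobson radical (commutative case). -/
lemma isNilpotent_mem_jacobson_bot {S : Type*} [CommRing S] {x : S}
    (hx : IsNilpotent x) : x ∈ Ideal.jacobson (⊥ : Ideal S) :=
  Ideal.radical_le_jacobson (mem_nilradical.mpr hx)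

open LaurentPolynomial in
/-- Clear denominators uniformly: a polynomial over `R[T;T⁻¹]` times a suitable power of
`T` lifts to a polynomial over `R[X]`. -/
lemma exists_uniform_lift {R : Type*} [CommRing R] (f : (LaurentPolynomial R)[X]) :
    ∃ (n : ℕ) (f₀ : (Polynomial R)[X]),
      f₀.map (Polynomial.toLaurent) = f * Polynomial.C (T (n : ℤ)) := by
  classical
  choose nn pp hpp using fun k => exists_T_pow (f.coeff k)
  set N : ℕ := f.support.sup nn with hN
  refine ⟨N, ?_⟩
  have hrange : ∀ k, (f * Polynomial.C (T (N : ℤ))).coeff k ∈ Set.range (Polynomial.toLaurent (R := R)) := by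
    intro k
    rw [coeff_mul_C]
    by_cases hk : k ∈ f.support
    · have hle : nn k ≤ N := Finset.le_sup hk
      refine ⟨pp k * X ^ (N - nn k), ?_⟩
      have hcast : (N : ℤ) = (nn k : ℤ) + ((N - nn k : ℕ) : ℤ) := by push_cast; omega
      rw [map_mul, hpp k, Polynomial.toLaurent_X_pow, hcast, T_add, mul_assoc]
    · refine ⟨0, ?_⟩
      simp [Polynomial.notMem_support_iff.mp hk]
  have := (Polynomial.lifts_iff_coeff_lifts (f := Polynomial.toLaurent (R := R))
    (f * Polynomial.C (T (N : ℤ)))).mpr hrange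
  exact (Polynomial.mem_lifts _).mp this

theorem laurent_isJArmendariz (R : Type*) [CommRing R]
    (h : IsJArmendariz R[X]) : IsJArmendariz (LaurentPolynomial R) := by
  classical
  intro f g hfg i j
  open LaurentPolynomial in
  · obtain ⟨n, F, hF⟩ := exists_uniform_lift f
    obtain ⟨m, G, hG⟩ := exists_uniform_lift g
    have hFG : F * G = 0 := by
      apply Polynomial.map_injective _ Polynomial.toLaurent_injective
      rw [Polynomial.map_mul, hF, hG, Polynomial.map_zero]
      calc f * Polynomial.C (T (n : ℤ)) * (g * Polynomial.C (T (m : ℤ)))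
          = f * g * (Polynomial.C (T (n : ℤ)) * Polynomial.C (T (m : ℤ))) := by ring
        _ = 0 := by rw [hfg, zero_mul]
    have hmem := h F G hFG i j
    have hnil : IsNilpotent (F.coeff i * G.coeff j) := isNilpotent_of_mem_jacobson_bot hmem
    have hnil' : IsNilpotent (Polynomial.toLaurent (F.coeff i * G.coeff j)) :=
      hnil.map _
    have hFi : Polynomial.toLaurent (F.coeff i) = f.coeff i * T (n : ℤ) := by
      rw [← Polynomial.coeff_map, hF, coeff_mul_C]
    have hGj : Polynomial.toLaurent (G.coeff j) = g.coeff j * T (m : ℤ) := by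
      rw [← Polynomial.coeff_map, hG, coeff_mul_C]
    have key : f.coeff i * g.coeff j
        = Polynomial.toLaurent (F.coeff i * G.coeff j) * T (-((n : ℤ) + (m : ℤ))) := by
      rw [map_mul, hFi, hGj]
      have : T ((n : ℤ)) * T ((m : ℤ)) * T (-((n : ℤ) + (m : ℤ))) = (1 : LaurentPolynomial R) := by
        rw [← T_add, ← T_add, add_neg_cancel, T_zero]
      calc f.coeff i * g.coeff j
          = f.coeff i * g.coeff j *
            (T ((n : ℤ)) * T ((m : ℤ)) * T (-((n : ℤ) + (m : ℤ)))) := by rw [this, mul_one]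
        _ = f.coeff i * T (n : ℤ) * (g.coeff j * T (m : ℤ)) * T (-((n : ℤ) + (m : ℤ))) := by
            ring
    rw [key]
    exact isNilpotent_mem_jacobson_bot ((Commute.all _ _).isNilpotent_mul_right hnil')
end

section
/- Let F be a field, R = M₂(F), and S = { Σ_{i≥0} a_i t^i ∈ R[[t]] : a₀ is a scalar multiple of the identity matrix }. Then S is a local ring (hence J-Armendariz) but S is not weak Armendariz: for f(x) = e₁₁t − e₁₂t·x and g(x) = e₂₁t + e₁₁t·x in S[x], f(x)g(x) = 0 but (e₁₁t)² = e₁₁t² is not nilpotent in S. -/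
open Polynomial

/-- A ring is weak Armendariz if `f * g = 0` in `R[X]` implies all coefficient products
are nilpotent. -/
def IsWeakArmendariz (R : Type*) [Ring R] : Prop :=
  ∀ f g : R[X], f * g = 0 → ∀ i j : ℕ, IsNilpotent (f.coeff i * g.coeff j)

/-- The subring of the power series ring over `M₂(F)` consisting of series whose
constant term is a scalar matrix. -/
noncomputable def scalarConstSubring (F : Type*) [Field F] :
    Subring (PowerSeries (Matrix (Fin 2) (Fin 2) F)) :=
  Subring.comap (PowerSeries.constantCoeff (R := Matrix (Fin 2) (Fin 2) F))
    (algebraMap F (Matrix (Fin 2) (Fin 2) F)).range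

section aux
variable {F : Type*} [Field F]

local notation "M2" => Matrix (Fin 2) (Fin 2) F
local notation "S" => scalarConstSubring F

lemma mem_scalarConstSubring (φ : PowerSeries M2) :
    φ ∈ scalarConstSubring F ↔ ∃ c : F, PowerSeries.constantCoeff (R := M2) φ = algebraMap F M2 c := by
  simp [scalarConstSubring, Subring.mem_comap, RingHom.mem_range, eq_comm]

lemma isUnit_of_constCoeff (s : S) (h : IsUnit (PowerSeries.constantCoeff (R := M2) (s : PowerSeries M2))) :
    IsUnit s := by
  obtain ⟨u, hu⟩ := h
  obtain ⟨c, hc⟩ := (mem_scalarConstSubring _).1 s.2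
  have hc0 : c ≠ 0 := by
    rintro rfl
    rw [map_zero] at hc
    rw [hc] at hu
    exact u.ne_zero hu
  have hinv : (↑u⁻¹ : M2) = algebraMap F M2 c⁻¹ := by
    apply Units.inv_eq_of_mul_eq_one_right
    rw [hu, hc, ← map_mul, mul_inv_cancel₀ hc0, map_one]
  have hmem : PowerSeries.invOfUnit (s : PowerSeries M2) u ∈ scalarConstSubring F := by
    rw [mem_scalarConstSubring]
    exact ⟨c⁻¹, by rw [PowerSeries.constantCoeff_invOfUnit, hinv]⟩
  exact ⟨⟨s, ⟨_, hmem⟩,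
    Subtype.ext (PowerSeries.mul_invOfUnit _ u hu.symm),
    Subtype.ext (PowerSeries.invOfUnit_mul _ u hu.symm)⟩, rfl⟩

end aux
section aux2
variable {F : Type*} [Field F]
local notation "M2" => Matrix (Fin 2) (Fin 2) F
local notation "S" => scalarConstSubring F

instance : Nontrivial S := ⟨1, 0, fun h => by
  have := congrArg (fun x : S => (x : PowerSeries M2)) h
  simpa using one_ne_zero (α := PowerSeries M2) this⟩

lemma scalarConstSubring_local : IsLocalRing S := by
  refine ⟨fun {a b} hab => ?_⟩
  obtain ⟨c, hc⟩ := (mem_scalarConstSubring _).1 a.2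
  by_cases h0 : c = 0
  · right
    apply isUnit_of_constCoeff
    have hb : b = 1 - a := by rw [← hab]; abel
    rw [hb]
    have h1a : ((1 - a : S) : PowerSeries M2) = 1 - (a : PowerSeries M2) := rfl
    rw [h1a, map_sub, map_one, hc, h0, map_zero, sub_zero]
    exact isUnit_one
  · left
    apply isUnit_of_constCoeff
    rw [hc]
    exact (isUnit_iff_ne_zero.2 h0).map (algebraMap F M2)

lemma mem_jacobson_of_constCoeff_zero (s : S)
    (h : PowerSeries.constantCoeff (R := M2) (s : PowerSeries M2) = 0) :
    s ∈ Ideal.jacobson (⊥ : Ideal S) := by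
  rw [Ideal.jacobson, Ideal.mem_sInf]
  rintro J ⟨-, hJ⟩
  by_contra hs
  have hlt : J < J ⊔ Ideal.span {s} := by
    rw [SetLike.lt_iff_le_and_exists]
    exact ⟨le_sup_left, s, Ideal.mem_sup_right (Ideal.subset_span rfl), hs⟩
  have htop : J ⊔ Ideal.span {s} = ⊤ := hJ.out.2 _ hlt
  have h1 : (1 : S) ∈ J ⊔ Ideal.span {s} := htop ▸ Submodule.mem_top
  obtain ⟨m, hm, y, hy, hsum⟩ := Submodule.mem_sup.1 h1
  obtain ⟨r, hr⟩ := Submodule.mem_span_singleton.1 hy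
  have hmu : IsUnit m := by
    apply isUnit_of_constCoeff
    have hm1 : m = 1 - r * s := by
      rw [← hsum, ← hr, smul_eq_mul]; abel
    rw [hm1]
    have h1a : ((1 - r * s : S) : PowerSeries M2) = 1 - (r : PowerSeries M2) * s := rfl
    rw [h1a, map_sub, map_one, map_mul, h, mul_zero, sub_zero]
    exact isUnit_one
  exact hJ.ne_top (J.eq_top_of_isUnit_mem hm hmu)

/-- Constant-coefficient scalar value, as a ring hom to `F`. -/
noncomputable def piHom : S →+* F where
  toFun s := (PowerSeries.constantCoeff (R := M2) (s : PowerSeries M2)) 0 0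
  map_one' := by
    show (PowerSeries.constantCoeff (R := M2) (((1 : S) : PowerSeries M2))) 0 0 = 1
    rw [Subring.coe_one, map_one, Matrix.one_apply_eq]
  map_mul' s t := by
    obtain ⟨c, hc⟩ := (mem_scalarConstSubring _).1 s.2
    obtain ⟨d, hd⟩ := (mem_scalarConstSubring _).1 t.2
    show (PowerSeries.constantCoeff (R := M2) (((s * t : S) : PowerSeries M2))) 0 0 =
      (PowerSeries.constantCoeff (R := M2) ((s : PowerSeries M2))) 0 0 *
        (PowerSeries.constantCoeff (R := M2) ((t : PowerSeries M2))) 0 0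
    rw [Subring.coe_mul, map_mul, hc, hd, ← map_mul]
    simp [Matrix.algebraMap_matrix_apply]
  map_zero' := by
    show (PowerSeries.constantCoeff (R := M2) (((0 : S) : PowerSeries M2))) 0 0 = 0
    rw [Subring.coe_zero, map_zero]; rfl
  map_add' s t := by
    show (PowerSeries.constantCoeff (R := M2) (((s + t : S) : PowerSeries M2))) 0 0 = _
    rw [Subring.coe_add, map_add]; rfl

lemma constCoeff_eq_zero_of_piHom (s : S) (h : piHom s = 0) :
    PowerSeries.constantCoeff (R := M2) (s : PowerSeries M2) = 0 := by
  obtain ⟨c, hc⟩ := (mem_scalarConstSubring _).1 s.2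
  have hcc : c = 0 := by
    have : piHom s = c := by
      simp [piHom, hc, Matrix.algebraMap_matrix_apply]
    rwa [h, eq_comm] at this
  rw [hc, hcc, map_zero]

end aux2
section aux3
variable {F : Type*} [Field F]
local notation "M2" => Matrix (Fin 2) (Fin 2) F
local notation "S" => scalarConstSubring F

lemma ps_monomial_mul_monomial (m n : ℕ) (A B : M2) :
    PowerSeries.monomial (R := M2) m A * PowerSeries.monomial (R := M2) n B =
      PowerSeries.monomial (R := M2) (m + n) (A * B) := by
  exact PowerSeries.monomial_mul_monomial m n A B

lemma monomial_one_mem (A : M2) (n : ℕ) :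
    PowerSeries.monomial (R := M2) (n + 1) A ∈ scalarConstSubring F := by
  rw [mem_scalarConstSubring]
  refine ⟨0, ?_⟩
  rw [map_zero, ← PowerSeries.coeff_zero_eq_constantCoeff_apply, PowerSeries.coeff_monomial]
  simp

variable (F) in
/-- `e₁₁ t` as an element of `S`. -/
noncomputable def sa : S := ⟨PowerSeries.monomial (R := M2) 1 (Matrix.single 0 0 1),
  monomial_one_mem _ 0⟩

variable (F) in
/-- `e₁₂ t` as an element of `S`. -/
noncomputable def sb : S := ⟨PowerSeries.monomial (R := M2) 1 (Matrix.single 0 1 1),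
  monomial_one_mem _ 0⟩

variable (F) in
/-- `e₂₁ t` as an element of `S`. -/
noncomputable def sc : S := ⟨PowerSeries.monomial (R := M2) 1 (Matrix.single 1 0 1),
  monomial_one_mem _ 0⟩

lemma mat1 : (Matrix.single 0 0 1 : M2) * Matrix.single 1 0 1 = 0 :=
  Matrix.single_mul_single_of_ne (c := 1) 0 0 1 (by decide) 1

lemma mat2 : (Matrix.single 0 1 1 : M2) * Matrix.single 0 0 1 = 0 :=
  Matrix.single_mul_single_of_ne (c := 1) 0 1 0 (by decide) 1

lemma mat3 : (Matrix.single 0 1 1 : M2) * Matrix.single 1 0 1 =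
    Matrix.single 0 0 1 := by
  rw [Matrix.single_mul_single_same, one_mul]

lemma mat4 : (Matrix.single 0 0 1 : M2) * Matrix.single 0 0 1 =
    Matrix.single 0 0 1 := by
  rw [Matrix.single_mul_single_same, one_mul]

lemma rel1 : sa F * sc F = 0 := by
  apply Subtype.ext
  show PowerSeries.monomial (R := M2) 1 _ * PowerSeries.monomial (R := M2) 1 _ = 0
  rw [ps_monomial_mul_monomial, mat1, map_zero]

lemma rel2 : (-sb F) * sa F = 0 := by
  apply Subtype.ext
  show -(PowerSeries.monomial (R := M2) 1 _) * PowerSeries.monomial (R := M2) 1 _ = 0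
  rw [neg_mul, ps_monomial_mul_monomial, mat2, map_zero, neg_zero]

lemma rel3 : (-sb F) * sc F = -(sa F * sa F) := by
  apply Subtype.ext
  show -(PowerSeries.monomial (R := M2) 1 _) * PowerSeries.monomial (R := M2) 1 _ =
    -(PowerSeries.monomial (R := M2) 1 _ * PowerSeries.monomial (R := M2) 1 _)
  rw [neg_mul, ps_monomial_mul_monomial, ps_monomial_mul_monomial, mat3, mat4]

lemma sa_sq : ((sa F * sa F : S) : PowerSeries M2) =
    PowerSeries.monomial (R := M2) 2 (Matrix.single 0 0 1) := by
  show PowerSeries.monomial (R := M2) 1 _ * PowerSeries.monomial (R := M2) 1 _ = _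
  rw [ps_monomial_mul_monomial, mat4]

lemma sa_sq_pow (m : ℕ) :
    (PowerSeries.monomial (R := M2) 2 (Matrix.single 0 0 1 : M2)) ^ (m + 1) =
      PowerSeries.monomial (R := M2) (2 * m + 2) (Matrix.single 0 0 1) := by
  induction m with
  | zero => simp
  | succ k ih =>
    rw [pow_succ, ih, ps_monomial_mul_monomial, mat4]
    ring_nf

lemma not_nilpotent_sa_sq : ¬ IsNilpotent (sa F * sa F) := by
  rintro ⟨n, hn⟩
  match n, hn with
  | 0, hn => simp only [pow_zero] at hn; exact one_ne_zero (α := S) hn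
  | (m + 1), hn =>
    have hv : (((sa F * sa F) ^ (m + 1) : S) : PowerSeries M2) = 0 := by rw [hn]; rfl
    rw [SubmonoidClass.coe_pow, sa_sq, sa_sq_pow] at hv
    have h2 := congrArg (PowerSeries.coeff (R := M2) (2 * m + 2)) hv
    rw [PowerSeries.coeff_monomial_same, map_zero] at h2
    have h00 := congrFun (congrFun h2 0) 0
    rw [Matrix.single_apply_same] at h00
    exact one_ne_zero h00

lemma not_weakArmendariz_aux :
    ∃ f g : (S)[X], f * g = 0 ∧ ¬ IsNilpotent (f.coeff 0 * g.coeff 1) := by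
  refine ⟨Polynomial.monomial 0 (sa F) + Polynomial.monomial 1 (-(sb F)),
    Polynomial.monomial 0 (sc F) + Polynomial.monomial 1 (sa F), ?_, ?_⟩
  · rw [add_mul, mul_add, mul_add]
    simp only [Polynomial.monomial_mul_monomial]
    rw [rel1, rel2, rel3]
    simp [Polynomial.monomial_neg]
  · have hcoeffs : (Polynomial.monomial 0 (sa F) + Polynomial.monomial 1 (-(sb F))).coeff 0 *
        (Polynomial.monomial 0 (sc F) + Polynomial.monomial 1 (sa F)).coeff 1 =
        sa F * sa F := by
      simp [Polynomial.coeff_monomial]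
    rw [hcoeffs]
    exact not_nilpotent_sa_sq

end aux3

theorem scalarConstSubring_local_jArmendariz_not_weakArmendariz
    (F : Type*) [Field F] :
    IsLocalRing (scalarConstSubring F) ∧ IsJArmendariz (scalarConstSubring F) ∧
      ¬ IsWeakArmendariz (scalarConstSubring F) := by
  refine ⟨scalarConstSubring_local, ?_, ?_⟩
  · intro f g h i j
    apply mem_jacobson_of_constCoeff_zero
    have hmap : (f.map piHom) * (g.map piHom) = 0 := by
      rw [← Polynomial.map_mul, h, Polynomial.map_zero]
    rw [Subring.coe_mul, map_mul]
    rcases mul_eq_zero.1 hmap with h0 | h0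
    · have hz : piHom (f.coeff i) = 0 := by
        have := congrArg (fun p => Polynomial.coeff p i) h0
        simpa [Polynomial.coeff_map] using this
      rw [constCoeff_eq_zero_of_piHom _ hz, zero_mul]
    · have hz : piHom (g.coeff j) = 0 := by
        have := congrArg (fun p => Polynomial.coeff p j) h0
        simpa [Polynomial.coeff_map] using this
      rw [constCoeff_eq_zero_of_piHom _ hz, mul_zero]
  · intro H
    obtain ⟨f, g, hfg, hnil⟩ := not_weakArmendariz_aux (F := F)
    exact hnil (H f g hfg 0 1)
end
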